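/- arXiv:2512.02384 — 3 statements merged into one kernel-verified Lean document; each statement's English description precedes it below -/
import Mathlib

section
/- Fix β ∈ (0,1) and α > 1/4. For every k ∈ ℕ there exists a constant C = C(β, α, k) such that for all N ≥ 1 and all h with 0 ≤ h ≤ N^{−α}: E_{z ~ N(μ, γ²/N)}[ ( (e^z·cosh(2h) − e^{−z})/(e^z·cosh(2h) + e^{−z}) − q_{β,h} )^{2k} ] ≤ C·N^{−k}, where γ > 0 is defined by 1/γ² = 1/β² − (1 − tanh⁴(h)) and μ = γ²·tanh²(h). -/
open MeasureTheory ProbabilityTheory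

noncomputable section

/-- Standard Gaussian measure on `ℝ`. -/
def stdGaussian : Measure ℝ := gaussianReal 0 1

/-- The overlap constant `q_{β,h}`, the unique solution in `(0,1]` of the replica-symmetric
fixed point equation (set to `0` for `h = 0`). -/
def qOverlap (β h : ℝ) : ℝ :=
  if h = 0 then 0 else
    sSup {q : ℝ | q ∈ Set.Ioc (0 : ℝ) 1 ∧
      q = ∫ g, Real.tanh (β * g * Real.sqrt q + h) ^ 2 ∂stdGaussian}

/-- `q₁(β,h) = E tanh(β g √q_{β,h} + h)`. -/
def q1 (β h : ℝ) : ℝ :=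
  ∫ g, Real.tanh (β * g * Real.sqrt (qOverlap β h) + h) ∂stdGaussian

/-- Hyperbolic secant. -/
def sech (x : ℝ) : ℝ := 1 / Real.cosh x

/-- The Almeida–Thouless condition for `(β,h)`. -/
def ATCond (β h : ℝ) : Prop :=
  β ^ 2 * ∫ g, sech (β * g * Real.sqrt (qOverlap β h) + h) ^ 4 ∂stdGaussian < 1

/-- The AT condition with gap at least `g0`. -/
def ATgap (β h g0 : ℝ) : Prop :=
  β ^ 2 * ∫ g, sech (β * g * Real.sqrt (qOverlap β h) + h) ^ 4 ∂stdGaussian ≤ 1 - g0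

/-- The one-dimensional RGD/AMP update map `f_{β,λ}`. -/
def fbl (β lam z : ℝ) : ℝ :=
  ∫ g, Real.tanh (β * g * Real.sqrt (qOverlap β (β * lam * z)) + β * lam * z) ∂stdGaussian

/-- `h_* = inf{h ≥ 0 : (β,h) satisfies AT}`. -/
def hStar (β : ℝ) : ℝ := sInf {h : ℝ | 0 ≤ h ∧ ATCond β h}

namespace S10

open Real

lemma tanh_hasDerivAt (x : ℝ) : HasDerivAt Real.tanh (1 / Real.cosh x ^ 2) x := by
  have h := (Real.hasDerivAt_sinh x).div (Real.hasDerivAt_cosh x) (Real.cosh_pos x).ne'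
  have : (Real.cosh x * Real.cosh x - Real.sinh x * Real.sinh x) / Real.cosh x ^ 2
      = 1 / Real.cosh x ^ 2 := by
    rw [show Real.cosh x * Real.cosh x - Real.sinh x * Real.sinh x
        = Real.cosh x ^ 2 - Real.sinh x ^ 2 by ring, Real.cosh_sq_sub_sinh_sq]
  rw [this] at h
  exact h.congr_of_eventuallyEq (by filter_upwards with y using (Real.tanh_eq_sinh_div_cosh y))

lemma tanh_lipschitz : LipschitzWith 1 Real.tanh := by
  apply lipschitzWith_of_nnnorm_deriv_le (fun x => (tanh_hasDerivAt x).differentiableAt)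
  intro x
  rw [(tanh_hasDerivAt x).deriv]
  rw [← NNReal.coe_le_coe, coe_nnnorm, Real.norm_eq_abs, NNReal.coe_one]
  rw [abs_of_nonneg (by positivity)]
  rw [div_le_one (by positivity)]
  nlinarith [Real.one_le_cosh x]

lemma continuous_tanh : Continuous Real.tanh :=
  continuous_iff_continuousAt.mpr fun x => (tanh_hasDerivAt x).differentiableAt.continuousAt

lemma abs_tanh_sub (a b : ℝ) : |Real.tanh a - Real.tanh b| ≤ |a - b| := by
  have := tanh_lipschitz.dist_le_mul a b
  simpa [Real.dist_eq] using this

lemma abs_tanh_le (a : ℝ) : |Real.tanh a| ≤ |a| := by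
  simpa [Real.tanh_zero] using abs_tanh_sub a 0

lemma F_eq_tanh (A z : ℝ) (hA : 0 < A) :
    (Real.exp z * A - Real.exp (-z)) / (Real.exp z * A + Real.exp (-z))
      = Real.tanh (z + Real.log A / 2) := by
  set s := Real.exp (Real.log A / 2) with hs
  have hs0 : 0 < s := Real.exp_pos _
  have hs2 : s ^ 2 = A := by
    rw [hs, sq, ← Real.exp_add]
    rw [show Real.log A / 2 + Real.log A / 2 = Real.log A by ring, Real.exp_log hA]
  have hez : 0 < Real.exp z := Real.exp_pos _
  rw [Real.tanh_eq_sinh_div_cosh, Real.sinh_eq, Real.cosh_eq, Real.exp_add,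
    show -(z + Real.log A / 2) = -z + -(Real.log A / 2) by ring, Real.exp_add,
    Real.exp_neg (Real.log A / 2), ← hs]
  have hden : Real.exp z * A + Real.exp (-z) > 0 := by positivity
  have hden2 : Real.exp z * s + Real.exp (-z) * s⁻¹ > 0 := by positivity
  rw [div_div_div_cancel_right₀]
  · rw [div_eq_div_iff hden.ne' hden2.ne']
    field_simp
    linear_combination (-2 * Real.exp z * Real.exp (-z)) * hs2
  · norm_num

lemma integrable_exp_mul_gauss (c : ℝ) :
    Integrable (fun x : ℝ => Real.exp (c * x) * Real.exp (-(1/2) * x ^ 2)) := by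
  have h : ∀ x : ℝ, Real.exp (c * x) * Real.exp (-(1/2) * x ^ 2)
      = Real.exp (c ^ 2 / 2) * Real.exp (-(1/2) * (x - c) ^ 2) := by
    intro x; rw [← Real.exp_add, ← Real.exp_add]; ring_nf
  simp_rw [h]
  exact ((integrable_exp_neg_mul_sq (by norm_num : (0:ℝ) < 1/2)).comp_sub_right c).const_mul _

lemma integrable_abs_pow_gauss (n : ℕ) :
    Integrable (fun x : ℝ => |x| ^ n * Real.exp (-(1/2) * x ^ 2)) := by
  refine Integrable.mono' ((((integrable_exp_mul_gauss 1).add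
    (integrable_exp_mul_gauss (-1))).const_mul (n.factorial : ℝ)))
    ?_ (ae_of_all _ ?_)
  · exact (((continuous_abs.pow n).mul
      (Real.continuous_exp.comp (by continuity))).aestronglyMeasurable)
  · intro x
    rw [Real.norm_eq_abs, abs_of_nonneg (by positivity)]
    have h1 : |x| ^ n ≤ (n.factorial : ℝ) * Real.exp |x| := by
      have h := Real.pow_div_factorial_le_exp (x := |x|) (abs_nonneg x) n
      rw [div_le_iff₀ (by positivity : (0:ℝ) < (n.factorial : ℝ))] at h
      linarith
    have h2 : Real.exp |x| ≤ Real.exp x + Real.exp (-x) := by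
      rcases le_total 0 x with h | h
      · rw [abs_of_nonneg h]; linarith [(Real.exp_pos (-x)).le]
      · rw [abs_of_nonpos h]; linarith [(Real.exp_pos x).le]
    have he : 0 < Real.exp (-(1/2) * x ^ 2) := Real.exp_pos _
    calc |x| ^ n * Real.exp (-(1/2) * x ^ 2)
        ≤ ((n.factorial : ℝ) * (Real.exp x + Real.exp (-x))) * Real.exp (-(1/2) * x ^ 2) := by
          apply mul_le_mul_of_nonneg_right _ he.le
          calc |x| ^ n ≤ (n.factorial : ℝ) * Real.exp |x| := h1
          _ ≤ (n.factorial : ℝ) * (Real.exp x + Real.exp (-x)) :=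
              mul_le_mul_of_nonneg_left h2 (by positivity)
    _ = (n.factorial : ℝ) * (Real.exp (1 * x) * Real.exp (-(1/2) * x ^ 2)
          + Real.exp ((-1) * x) * Real.exp (-(1/2) * x ^ 2)) := by
        rw [one_mul, neg_one_mul]; ring

lemma integrable_pow_gauss (n : ℕ) :
    Integrable (fun x : ℝ => x ^ n * Real.exp (-(1/2) * x ^ 2)) := by
  refine (integrable_abs_pow_gauss n).mono'
    (((continuous_pow n).mul (Real.continuous_exp.comp (by continuity))).aestronglyMeasurable)
    (ae_of_all _ fun x => ?_)
  rw [Real.norm_eq_abs, abs_mul, abs_pow, abs_of_nonneg (Real.exp_pos _).le]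

instance : IsProbabilityMeasure _root_.stdGaussian := by unfold _root_.stdGaussian; infer_instance

lemma std_eq : _root_.stdGaussian
    = MeasureTheory.Measure.withDensity volume
        (fun x => ((Real.toNNReal (gaussianPDFReal 0 1 x)) : ENNReal)) := by
  rw [_root_.stdGaussian, gaussianReal_of_var_ne_zero _ one_ne_zero]; rfl

lemma pdf01 (x : ℝ) :
    gaussianPDFReal 0 1 x = (Real.sqrt (2 * π))⁻¹ * Real.exp (-(1/2) * x ^ 2) := by
  unfold gaussianPDFReal
  rw [NNReal.coe_one, mul_one, sub_zero]
  congr 1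
  ring

lemma smul_pdf_eq (f : ℝ → ℝ) :
    (fun x => (Real.toNNReal (gaussianPDFReal 0 1 x)) • f x)
      = fun x => gaussianPDFReal 0 1 x * f x := by
  funext x
  rw [NNReal.smul_def, smul_eq_mul, Real.coe_toNNReal _ (gaussianPDFReal_nonneg 0 1 x)]

lemma integral_std (f : ℝ → ℝ) :
    ∫ x, f x ∂stdGaussian = ∫ x, gaussianPDFReal 0 1 x * f x := by
  rw [std_eq, integral_withDensity_eq_integral_smul
    (measurable_gaussianPDFReal 0 1).real_toNNReal, smul_pdf_eq]

lemma integrable_std_iff {f : ℝ → ℝ} :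
    Integrable f stdGaussian ↔ Integrable (fun x => gaussianPDFReal 0 1 x * f x) volume := by
  rw [std_eq, integrable_withDensity_iff_integrable_smul
    (measurable_gaussianPDFReal 0 1).real_toNNReal, smul_pdf_eq]

lemma integrable_pow_std (n : ℕ) : Integrable (fun x : ℝ => x ^ n) stdGaussian := by
  rw [integrable_std_iff]
  refine ((integrable_abs_pow_gauss n).const_mul ((Real.sqrt (2 * π))⁻¹)).mono'
    (((measurable_gaussianPDFReal 0 1).mul (measurable_id.pow_const n)).aestronglyMeasurable)
    (ae_of_all _ fun x => ?_)
  rw [Real.norm_eq_abs, abs_mul, abs_of_nonneg (gaussianPDFReal_nonneg 0 1 x), abs_pow]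
  exact le_of_eq (by rw [pdf01]; ring)

lemma integrable_id_std : Integrable (fun x : ℝ => x) stdGaussian := by
  have := integrable_pow_std 1
  simpa using this

lemma integral_id_std : ∫ x, x ∂stdGaussian = (0 : ℝ) := by
  have hmap : MeasureTheory.Measure.map (fun x : ℝ => -x) _root_.stdGaussian = _root_.stdGaussian := by
    have h := gaussianReal_map_const_mul (μ := 0) (v := 1) (-1 : ℝ)
    unfold _root_.stdGaussian
    have hfun : (fun x : ℝ => -x) = fun x : ℝ => (-1 : ℝ) * x := funext fun x => by ring
    rw [hfun, h]
    congr 1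
    · norm_num
    · ext; norm_num
  have h2 : ∫ x, x ∂stdGaussian = ∫ x, -x ∂stdGaussian := by
    conv_lhs => rw [← hmap]
    exact (Homeomorph.neg ℝ).measurableEmbedding.integral_map _
  rw [integral_neg] at h2
  linarith

lemma integral_sq_std : ∫ x, x ^ 2 ∂stdGaussian = (1 : ℝ) := by
  have hJ : ∫ x : ℝ, x ^ 2 * Real.exp (-(1/2) * x ^ 2) = Real.sqrt (2 * π) := by
    have hu : ∀ x : ℝ, HasDerivAt (fun y : ℝ => y) 1 x := fun x => hasDerivAt_id x
    have hv : ∀ x : ℝ, HasDerivAt (fun y : ℝ => -Real.exp (-(1/2) * y ^ 2))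
        (x * Real.exp (-(1/2) * x ^ 2)) x := by
      intro x
      have h1 : HasDerivAt (fun y : ℝ => -(1/2) * y ^ 2) (-(1/2) * (2 * x ^ 1)) x :=
        (hasDerivAt_pow 2 x).const_mul (-(1/2))
      have h2 := h1.exp.neg
      exact h2.congr_deriv (by ring)
    have int1 : Integrable ((fun y : ℝ => y) * fun x => x * Real.exp (-(1/2) * x ^ 2)) := by
      refine (integrable_pow_gauss 2).congr (ae_of_all _ fun x => ?_)
      simp only [Pi.mul_apply]
      ring
    have int2 : Integrable ((fun _ : ℝ => (1:ℝ)) * fun x => -Real.exp (-(1/2) * x ^ 2)) := by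
      refine Integrable.congr ((integrable_exp_neg_mul_sq
        (by norm_num : (0:ℝ) < 1/2)).neg) (ae_of_all _ fun x => ?_)
      simp
    have int3 : Integrable ((fun y : ℝ => y) * fun x => -Real.exp (-(1/2) * x ^ 2)) := by
      refine (integrable_abs_pow_gauss 1).mono' ?_ (ae_of_all _ fun x => ?_)
      · exact (continuous_id.mul
          ((Real.continuous_exp.comp (by continuity)).neg)).aestronglyMeasurable
      · simp only [Pi.mul_apply, Real.norm_eq_abs, abs_mul, abs_neg,
          abs_of_nonneg (Real.exp_pos _).le, pow_one]
        exact le_refl _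
    have key := MeasureTheory.integral_mul_deriv_eq_deriv_mul_of_integrable (u' := fun _ => (1:ℝ)) (v' := fun x => x * Real.exp (-(1/2) * x ^ 2)) (fun x _ => hu x) (fun x _ => hv x) int1 int2 int3
    calc ∫ x : ℝ, x ^ 2 * Real.exp (-(1/2) * x ^ 2)
        = ∫ x : ℝ, x * (x * Real.exp (-(1/2) * x ^ 2)) := by
          congr 1; funext x; ring
      _ = - ∫ x : ℝ, (1 : ℝ) * (-Real.exp (-(1/2) * x ^ 2)) := key
      _ = ∫ x : ℝ, Real.exp (-(1/2) * x ^ 2) := by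
          rw [← integral_neg]; congr 1; funext x; ring
      _ = Real.sqrt (π / (1/2)) := integral_gaussian (1/2)
      _ = Real.sqrt (2 * π) := by norm_num [mul_comm]
  rw [integral_std]
  have heq : (fun x => gaussianPDFReal 0 1 x * x ^ 2)
      = fun x => (Real.sqrt (2 * π))⁻¹ * (x ^ 2 * Real.exp (-(1/2) * x ^ 2)) := by
    funext x; rw [pdf01]; ring
  rw [heq, MeasureTheory.integral_const_mul, hJ]
  rw [inv_mul_cancel₀ (by positivity : Real.sqrt (2 * π) ≠ 0)]


lemma qOverlap_nonneg (β h : ℝ) : 0 ≤ qOverlap β h := by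
  unfold qOverlap
  split
  · exact le_refl 0
  · exact Real.sSup_nonneg fun x hx => hx.1.1.le

lemma tanh_sq_le_one (y : ℝ) : Real.tanh y ^ 2 ≤ 1 := by
  rw [Real.tanh_eq_sinh_div_cosh, div_pow, div_le_one (by positivity)]
  nlinarith [Real.cosh_sq_sub_sinh_sq y]

lemma qOverlap_le (β : ℝ) (hβ0 : 0 < β) (hβ1 : β < 1) (h : ℝ) :
    qOverlap β h ≤ h ^ 2 / (1 - β ^ 2) := by
  have hb : 0 < 1 - β ^ 2 := by nlinarith
  unfold qOverlap
  split
  · positivity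
  · apply Real.sSup_le _ (by positivity)
    rintro x ⟨⟨hx0, hx1⟩, hfix⟩
    have hsq : Real.sqrt x ^ 2 = x := Real.sq_sqrt hx0.le
    have hexp : (fun g : ℝ => (β * g * Real.sqrt x + h) ^ 2)
        = fun g => (β ^ 2 * x) * g ^ 2 + ((2 * β * Real.sqrt x * h) * g + h ^ 2) := by
      funext g; linear_combination (β * g) ^ 2 * hsq
    have hint1 : Integrable (fun g : ℝ => Real.tanh (β * g * Real.sqrt x + h) ^ 2) stdGaussian := by
      refine (integrable_const (1:ℝ)).mono' ?_ (ae_of_all _ fun g => ?_)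
      · exact ((continuous_tanh.comp (by fun_prop)).pow 2).aestronglyMeasurable
      · rw [Real.norm_eq_abs, abs_of_nonneg (sq_nonneg _)]
        exact tanh_sq_le_one _
    have iA : Integrable (fun g : ℝ => β ^ 2 * x * g ^ 2) stdGaussian :=
      (integrable_pow_std 2).const_mul _
    have iB0 : Integrable (fun g : ℝ => 2 * β * Real.sqrt x * h * g) stdGaussian :=
      integrable_id_std.const_mul _
    have iB : Integrable (fun g : ℝ => 2 * β * Real.sqrt x * h * g + h ^ 2) stdGaussian :=
      iB0.add (integrable_const _)
    have hint2 : Integrable (fun g : ℝ => (β * g * Real.sqrt x + h) ^ 2) stdGaussian := by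
      rw [hexp]; exact iA.add iB
    have hval : ∫ g, (β * g * Real.sqrt x + h) ^ 2 ∂stdGaussian = β ^ 2 * x + h ^ 2 := by
      rw [hexp, integral_add iA iB, integral_add iB0 (integrable_const _),
        MeasureTheory.integral_const_mul, MeasureTheory.integral_const_mul,
        integral_sq_std, integral_id_std, integral_const]
      simp
    have hcmp : x ≤ β ^ 2 * x + h ^ 2 := by
      have hmono := integral_mono hint1 hint2 (fun g => ?_)
      · rw [hval] at hmono
        linarith [hfix ▸ hmono]
      · calc Real.tanh (β * g * Real.sqrt x + h) ^ 2
            = |Real.tanh (β * g * Real.sqrt x + h)| ^ 2 := (sq_abs _).symm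
          _ ≤ |β * g * Real.sqrt x + h| ^ 2 :=
              pow_le_pow_left₀ (abs_nonneg _) (abs_tanh_le _) 2
          _ = (β * g * Real.sqrt x + h) ^ 2 := sq_abs _
    rw [le_div_iff₀ hb]
    nlinarith

lemma gaussian_shift_scale (μ0 : ℝ) (v : NNReal) (hv : v ≠ 0) :
    gaussianReal μ0 v
      = MeasureTheory.Measure.map (fun x => Real.sqrt v * x + μ0) stdGaussian := by
  have hvpos : (0:ℝ) < (v:ℝ) := by
    have := lt_of_le_of_ne (zero_le : 0 ≤ v) (Ne.symm hv)
    exact_mod_cast this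
  have hσ : (0:ℝ) < Real.sqrt v := Real.sqrt_pos.mpr hvpos
  have h1 : MeasureTheory.Measure.map (fun x : ℝ => Real.sqrt v * x) stdGaussian
      = gaussianReal 0 v := by
    unfold _root_.stdGaussian
    rw [gaussianReal_map_const_mul]
    congr 1
    · ring
    · ext
      push_cast
      rw [mul_one, Real.sq_sqrt hvpos.le]
  rw [show (fun x : ℝ => Real.sqrt v * x + μ0)
      = (fun y : ℝ => y + μ0) ∘ (fun x : ℝ => Real.sqrt v * x) from rfl,
    ← MeasureTheory.Measure.map_map (measurable_add_const μ0)
      (measurable_const_mul _), h1, gaussianReal_map_add_const, zero_add]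

lemma affine_emb (a b : ℝ) (ha : a ≠ 0) :
    MeasurableEmbedding (fun x : ℝ => a * x + b) :=
  (affineHomeomorph a b ha).measurableEmbedding

lemma integrable_moment (μ0 : ℝ) (v : NNReal) (hv : v ≠ 0) (n : ℕ) :
    Integrable (fun z => (z - μ0) ^ n) (gaussianReal μ0 v) := by
  have hvpos : (0:ℝ) < (v:ℝ) := by
    have := lt_of_le_of_ne (zero_le : 0 ≤ v) (Ne.symm hv)
    exact_mod_cast this
  have hσ : Real.sqrt v ≠ 0 := (Real.sqrt_pos.mpr hvpos).ne'
  rw [gaussian_shift_scale μ0 v hv, (affine_emb _ _ hσ).integrable_map_iff]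
  have : ((fun z => (z - μ0) ^ n) ∘ fun x : ℝ => Real.sqrt v * x + μ0)
      = fun x : ℝ => (Real.sqrt v) ^ n * x ^ n := by
    funext x
    simp only [Function.comp_apply, add_sub_cancel_right, mul_pow]
  rw [this]
  exact (integrable_pow_std n).const_mul _

lemma moment_eq (μ0 : ℝ) (v : NNReal) (hv : v ≠ 0) (n : ℕ) :
    ∫ z, (z - μ0) ^ n ∂gaussianReal μ0 v
      = (Real.sqrt v) ^ n * ∫ x, x ^ n ∂stdGaussian := by
  have hvpos : (0:ℝ) < (v:ℝ) := by
    have := lt_of_le_of_ne (zero_le : 0 ≤ v) (Ne.symm hv)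
    exact_mod_cast this
  have hσ : Real.sqrt v ≠ 0 := (Real.sqrt_pos.mpr hvpos).ne'
  rw [gaussian_shift_scale μ0 v hv, (affine_emb _ _ hσ).integral_map]
  simp_rw [add_sub_cancel_right, mul_pow]
  exact MeasureTheory.integral_const_mul _ _

end S10

open S10 in
set_option maxHeartbeats 1000000 in
/-- Control of the effective overlap: for `β ∈ (0,1)`, `α > 1/4`, and any
`k`, there is `C = C(β,α,k)` such that for all `N ≥ 1` and `0 ≤ h ≤ N^{−α}`,
`E_{z ~ N(μ, γ²/N)}[((e^z cosh(2h) − e^{−z})/(e^z cosh(2h)+e^{−z}) − q_{β,h})^{2k}] ≤ C N^{−k}`,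
where `1/γ² = 1/β² − (1 − tanh⁴ h)`, `γ > 0`, and `μ = γ² tanh² h`. -/
theorem stmt10 (β α : ℝ) (hβ0 : 0 < β) (hβ1 : β < 1) (hα : 1 / 4 < α) (k : ℕ) :
    ∃ C : ℝ, 0 < C ∧ ∀ N : ℕ, 1 ≤ N → ∀ h : ℝ, 0 ≤ h → h ≤ (N : ℝ) ^ (-α) →
      ∀ γ μ0 : ℝ, 0 < γ →
        1 / γ ^ 2 = 1 / β ^ 2 - (1 - Real.tanh h ^ 4) →
        μ0 = γ ^ 2 * Real.tanh h ^ 2 →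
        (∫ z, ((Real.exp z * Real.cosh (2 * h) - Real.exp (-z)) /
              (Real.exp z * Real.cosh (2 * h) + Real.exp (-z)) - qOverlap β h) ^ (2 * k)
            ∂gaussianReal μ0 (Real.toNNReal (γ ^ 2 / N)))
          ≤ C / (N : ℝ) ^ k := by
  have hb : 0 < 1 - β ^ 2 := by nlinarith
  set Mk := ∫ x, x ^ (2 * k) ∂stdGaussian with hMkdef
  have hMk0 : 0 ≤ Mk := integral_nonneg fun x => (even_two_mul k).pow_nonneg x
  set Kb := β ^ 2 / (1 - β ^ 2) with hKb
  have hKbpos : 0 < Kb := by positivity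
  set K1 := β ^ 2 / (1 - β ^ 2) + 1 + 1 / (1 - β ^ 2) with hK1
  have hK1pos : 0 < K1 := by positivity
  refine ⟨2 ^ (2 * k) * (Kb ^ k * Mk + K1 ^ (2 * k)), by positivity, ?_⟩
  intro N hN h h0 hhle γ μ0 hγ hγeq hμ0
  have hNR : (1 : ℝ) ≤ (N : ℝ) := by exact_mod_cast hN
  have hN0 : (0 : ℝ) < (N : ℝ) := lt_of_lt_of_le one_pos hNR
  have hNk : (0 : ℝ) < (N : ℝ) ^ k := by positivity
  -- gamma bound
  have ht4 : 0 ≤ Real.tanh h ^ 4 := by positivity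
  have hγ2pos : 0 < γ ^ 2 := by positivity
  have he : (1 - β ^ 2) / β ^ 2 = 1 / β ^ 2 - 1 := by field_simp
  have hinv : (1 - β ^ 2) / β ^ 2 ≤ 1 / γ ^ 2 := by rw [hγeq, he]; linarith
  have hγle : γ ^ 2 ≤ Kb := by
    rw [hKb, le_div_iff₀ hb]
    have h2 := mul_le_mul_of_nonneg_right hinv (mul_pos (by positivity : (0:ℝ) < β ^ 2) hγ2pos).le
    rw [div_mul_eq_mul_div, one_div, inv_mul_eq_div] at h2
    have h3 : (1 - β ^ 2) * (β ^ 2 * γ ^ 2) / β ^ 2 = (1 - β ^ 2) * γ ^ 2 := by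
      field_simp
    have h4 : β ^ 2 * γ ^ 2 / γ ^ 2 = β ^ 2 := by field_simp
    rw [h3, h4] at h2
    linarith
  -- mu0 bounds
  have htle : Real.tanh h ^ 2 ≤ h ^ 2 := by
    calc Real.tanh h ^ 2 = |Real.tanh h| ^ 2 := (sq_abs _).symm
      _ ≤ |h| ^ 2 := pow_le_pow_left₀ (abs_nonneg _) (abs_tanh_le _) 2
      _ = h ^ 2 := sq_abs _
  have hμ0nn : 0 ≤ μ0 := by rw [hμ0]; positivity
  have hμ0le : μ0 ≤ Kb * h ^ 2 := by
    rw [hμ0]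
    calc γ ^ 2 * Real.tanh h ^ 2 ≤ γ ^ 2 * h ^ 2 :=
        mul_le_mul_of_nonneg_left htle hγ2pos.le
      _ ≤ Kb * h ^ 2 := mul_le_mul_of_nonneg_right hγle (sq_nonneg h)
  -- c bound
  set c := Real.log (Real.cosh (2 * h)) / 2 with hcdef
  have hA : 0 < Real.cosh (2 * h) := Real.cosh_pos _
  have hc0 : 0 ≤ c := div_nonneg (Real.log_nonneg (Real.one_le_cosh _)) two_pos.le
  have hcle : c ≤ h ^ 2 := by
    have h1 : Real.log (Real.cosh (2 * h)) ≤ (2 * h) ^ 2 / 2 := by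
      calc Real.log (Real.cosh (2 * h)) ≤ Real.log (Real.exp ((2 * h) ^ 2 / 2)) :=
          Real.log_le_log hA (Real.cosh_le_exp_half_sq _)
        _ = (2 * h) ^ 2 / 2 := Real.log_exp _
    have h2 : (2 * h) ^ 2 / 2 = 2 * h ^ 2 := by ring
    rw [hcdef]; rw [h2] at h1; linarith
  -- q bounds
  have hq0 := qOverlap_nonneg β h
  have hqle := qOverlap_le β hβ0 hβ1 h
  set q := qOverlap β h
  set D := K1 * h ^ 2 with hDdef
  have hD0 : 0 ≤ D := by positivity
  have hdelta : |Real.tanh (μ0 + c) - q| ≤ D := by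
    have h1 : |Real.tanh (μ0 + c)| ≤ μ0 + c := by
      have := abs_tanh_le (μ0 + c)
      rwa [abs_of_nonneg (add_nonneg hμ0nn hc0)] at this
    calc |Real.tanh (μ0 + c) - q| ≤ |Real.tanh (μ0 + c)| + |q| := abs_sub _ _
      _ ≤ (μ0 + c) + q := add_le_add h1 (le_of_eq (abs_of_nonneg hq0))
      _ ≤ (Kb * h ^ 2 + h ^ 2) + h ^ 2 / (1 - β ^ 2) := by
          apply add_le_add (add_le_add hμ0le hcle) hqle
      _ = D := by rw [hDdef, hK1, hKb]; ring
  -- measure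
  have hvpos : (0 : ℝ) < γ ^ 2 / N := by positivity
  have hvne : Real.toNNReal (γ ^ 2 / N) ≠ 0 := by
    simp only [ne_eq, Real.toNNReal_eq_zero, not_le]
    exact hvpos
  set ν := gaussianReal μ0 (Real.toNNReal (γ ^ 2 / N)) with hν
  -- pointwise bound
  have hptw : ∀ z : ℝ, ((Real.exp z * Real.cosh (2 * h) - Real.exp (-z)) /
        (Real.exp z * Real.cosh (2 * h) + Real.exp (-z)) - q) ^ (2 * k)
      ≤ 2 ^ (2 * k) * ((z - μ0) ^ (2 * k) + D ^ (2 * k)) := by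
    intro z
    rw [F_eq_tanh _ z hA, ← hcdef]
    have habs : |Real.tanh (z + c) - q| ≤ |z - μ0| + D := by
      calc |Real.tanh (z + c) - q|
          ≤ |Real.tanh (z + c) - Real.tanh (μ0 + c)| + |Real.tanh (μ0 + c) - q| :=
            abs_sub_le _ _ _
        _ ≤ |z - μ0| + D := by
            refine add_le_add ?_ hdelta
            have := abs_tanh_sub (z + c) (μ0 + c)
            rwa [show z + c - (μ0 + c) = z - μ0 by ring] at this
    calc (Real.tanh (z + c) - q) ^ (2 * k)
        = |Real.tanh (z + c) - q| ^ (2 * k) := ((even_two_mul k).pow_abs _).symm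
      _ ≤ (|z - μ0| + D) ^ (2 * k) := pow_le_pow_left₀ (abs_nonneg _) habs _
      _ ≤ 2 ^ (2 * k - 1) * (|z - μ0| ^ (2 * k) + D ^ (2 * k)) :=
          add_pow_le (abs_nonneg _) hD0 _
      _ ≤ 2 ^ (2 * k) * (|z - μ0| ^ (2 * k) + D ^ (2 * k)) := by
          apply mul_le_mul_of_nonneg_right
            (pow_le_pow_right₀ one_le_two (Nat.sub_le _ _)) (by positivity)
      _ = 2 ^ (2 * k) * ((z - μ0) ^ (2 * k) + D ^ (2 * k)) := by
          rw [(even_two_mul k).pow_abs]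
  -- integrate
  have hmom := integrable_moment μ0 _ hvne (2 * k)
  have hint : Integrable (fun z => 2 ^ (2 * k) * ((z - μ0) ^ (2 * k) + D ^ (2 * k))) ν :=
    (hmom.add (integrable_const _)).const_mul _
  have hmono := integral_mono_of_nonneg
    (ae_of_all _ fun z => (even_two_mul k).pow_nonneg _) hint (ae_of_all _ hptw)
  have hval : ∫ z, 2 ^ (2 * k) * ((z - μ0) ^ (2 * k) + D ^ (2 * k)) ∂ν
      = 2 ^ (2 * k) * ((Real.sqrt (Real.toNNReal (γ ^ 2 / N))) ^ (2 * k) * Mk + D ^ (2 * k)) := by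
    rw [hν, MeasureTheory.integral_const_mul, integral_add hmom (integrable_const _),
      moment_eq μ0 _ hvne (2 * k), integral_const]
    simp [hMkdef]
  -- evaluate the variance term
  have hcoe : ((Real.toNNReal (γ ^ 2 / N) : NNReal) : ℝ) = γ ^ 2 / N :=
    Real.coe_toNNReal _ hvpos.le
  have hsq : (Real.sqrt (Real.toNNReal (γ ^ 2 / N))) ^ (2 * k) = (γ ^ 2 / N) ^ k := by
    rw [pow_mul, Real.sq_sqrt (by rw [hcoe]; exact hvpos.le), hcoe]
  have hvar : (Real.sqrt (Real.toNNReal (γ ^ 2 / N))) ^ (2 * k) * Mk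
      ≤ Kb ^ k * Mk / (N : ℝ) ^ k := by
    rw [hsq, div_pow, div_mul_eq_mul_div, div_le_div_iff_of_pos_right hNk]
    exact mul_le_mul_of_nonneg_right (pow_le_pow_left₀ hγ2pos.le hγle k) hMk0
  have hhpow : D ^ (2 * k) ≤ K1 ^ (2 * k) / (N : ℝ) ^ k := by
    rw [hDdef, mul_pow]
    have e1 : (h ^ 2) ^ (2 * k) = h ^ (4 * k) := by rw [← pow_mul]; ring_nf
    have e2 : h ^ (4 * k) ≤ ((N : ℝ) ^ (-α)) ^ (4 * k) := pow_le_pow_left₀ h0 hhle _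
    have e3 : ((N : ℝ) ^ (-α)) ^ (4 * k) = (N : ℝ) ^ (-α * ((4 * k : ℕ) : ℝ)) := by
      rw [← Real.rpow_natCast ((N : ℝ) ^ (-α)) (4 * k), ← Real.rpow_mul hN0.le]
    have e4 : (N : ℝ) ^ (-α * ((4 * k : ℕ) : ℝ)) ≤ (N : ℝ) ^ (-(k : ℝ)) := by
      apply Real.rpow_le_rpow_of_exponent_le hNR
      have hk0 : (0 : ℝ) ≤ (k : ℝ) := Nat.cast_nonneg k
      push_cast
      nlinarith
    have e5 : (N : ℝ) ^ (-(k : ℝ)) = ((N : ℝ) ^ k)⁻¹ := by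
      rw [Real.rpow_neg hN0.le, Real.rpow_natCast]
    rw [e3] at e2
    have h1 : (h ^ 2) ^ (2 * k) ≤ ((N : ℝ) ^ k)⁻¹ := by
      rw [e1, ← e5]
      exact e2.trans e4
    calc K1 ^ (2 * k) * (h ^ 2) ^ (2 * k) ≤ K1 ^ (2 * k) * ((N : ℝ) ^ k)⁻¹ :=
        mul_le_mul_of_nonneg_left h1 (by positivity)
      _ = K1 ^ (2 * k) / (N : ℝ) ^ k := by rw [div_eq_mul_inv]
  calc (∫ z, ((Real.exp z * Real.cosh (2 * h) - Real.exp (-z)) /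
              (Real.exp z * Real.cosh (2 * h) + Real.exp (-z)) - q) ^ (2 * k) ∂ν)
      ≤ ∫ z, 2 ^ (2 * k) * ((z - μ0) ^ (2 * k) + D ^ (2 * k)) ∂ν := hmono
    _ = 2 ^ (2 * k) * ((Real.sqrt (Real.toNNReal (γ ^ 2 / N))) ^ (2 * k) * Mk + D ^ (2 * k)) :=
        hval
    _ ≤ 2 ^ (2 * k) * (Kb ^ k * Mk / (N : ℝ) ^ k + K1 ^ (2 * k) / (N : ℝ) ^ k) :=
        mul_le_mul_of_nonneg_left (add_le_add hvar hhpow) (by positivity)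
    _ = 2 ^ (2 * k) * (Kb ^ k * Mk + K1 ^ (2 * k)) / (N : ℝ) ^ k := by
        rw [← add_div, mul_div_assoc]
end
end

section
/- Fix β ∈ (0,1) and α > 1/4. For h ∈ ℝ define g_N(z) = ( cosh(z) + sinh²(h)·e^z ) / ( (1 + sinh²(h))·e^{tanh²(h)·z}·e^{(z²/2)·(1 − tanh⁴(h))} ). Then for every η > 0 there exists N₀ such that for all N ≥ N₀ and all h with 0 ≤ h ≤ N^{−α}: | E_{z ~ N(0, β²/N)}[ g_N(z)^{2N} ] − 1 | ≤ η. -/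
open MeasureTheory ProbabilityTheory

noncomputable section

namespace Stmt11Aux

noncomputable def FF (m z : ℝ) : ℝ := Real.cosh z + m * Real.sinh z
noncomputable def SS (m z : ℝ) : ℝ := Real.sinh z + m * Real.cosh z
noncomputable def fm (m z : ℝ) : ℝ := SS m z / FF m z
noncomputable def phi (m z : ℝ) : ℝ := Real.log (FF m z) - m * z - (1 - m ^ 2) / 2 * z ^ 2

lemma FF_pos {m : ℝ} (hm0 : 0 ≤ m) (hm1 : m ≤ 1) (z : ℝ) : 0 < FF m z := by
  have h1 := Real.cosh_pos (x := z)
  have h2 := Real.exp_pos z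
  have h3 : Real.cosh z + Real.sinh z = Real.exp z := Real.cosh_add_sinh z
  have key : FF m z = (1 - m) * Real.cosh z + m * Real.exp z := by
    rw [FF, ← h3]; ring
  rw [key]
  rcases eq_or_lt_of_le hm0 with h | h
  · simp [← h, h1]
  · have := mul_nonneg (by linarith : (0:ℝ) ≤ 1 - m) h1.le
    nlinarith

lemma SS_sq_le {m : ℝ} (hm : m ^ 2 ≤ 1) (z : ℝ) : SS m z ^ 2 ≤ FF m z ^ 2 := by
  have h := Real.cosh_sq z
  simp only [FF, SS]
  nlinarith

lemma abs_fm_le_one {m : ℝ} (hm0 : 0 ≤ m) (hm1 : m ≤ 1) (z : ℝ) : |fm m z| ≤ 1 := by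
  have hsq : m ^ 2 ≤ 1 := by nlinarith
  have hF := FF_pos hm0 hm1 z
  have : fm m z ^ 2 ≤ 1 := by
    rw [fm, div_pow]
    exact div_le_one_of_le₀ (SS_sq_le hsq z) (sq_nonneg _)
  exact (sq_le_one_iff_abs_le_one _).mp this

lemma fm_zero (m : ℝ) : fm m 0 = m := by simp [fm, SS, FF]

lemma hasDerivAt_FF (m z : ℝ) : HasDerivAt (FF m) (SS m z) z := by
  have := (Real.hasDerivAt_cosh z).add ((Real.hasDerivAt_sinh z).const_mul m); exact this

lemma hasDerivAt_SS (m z : ℝ) : HasDerivAt (SS m) (FF m z) z := by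
  have := (Real.hasDerivAt_sinh z).add ((Real.hasDerivAt_cosh z).const_mul m); exact this

lemma hasDerivAt_fm {m : ℝ} (hm0 : 0 ≤ m) (hm1 : m ≤ 1) (z : ℝ) :
    HasDerivAt (fm m) (1 - fm m z ^ 2) z := by
  have hF := FF_pos hm0 hm1 z
  have := (hasDerivAt_SS m z).div (hasDerivAt_FF m z) hF.ne'
  refine this.congr_deriv ?_
  rw [fm, div_pow]
  field_simp

lemma hasDerivAt_phi {m : ℝ} (hm0 : 0 ≤ m) (hm1 : m ≤ 1) (z : ℝ) :
    HasDerivAt (phi m) (fm m z - m - (1 - m ^ 2) * z) z := by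
  have hF := FF_pos hm0 hm1 z
  have h1 : HasDerivAt (fun y => Real.log (FF m y)) (fm m z) z := by
    simpa [fm, div_eq_mul_inv] using (hasDerivAt_FF m z).log hF.ne'
  have h2 : HasDerivAt (fun y : ℝ => m * y) m z := by
    simpa using (hasDerivAt_id z).const_mul m
  have h3 : HasDerivAt (fun y : ℝ => (1 - m ^ 2) / 2 * y ^ 2) ((1 - m ^ 2) * z) z := by
    have := (hasDerivAt_pow 2 z).const_mul ((1 - m ^ 2) / 2)
    refine this.congr_deriv ?_
    push_cast
    ring
  have := (h1.sub h2).sub h3; exact this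

lemma fm_lip {m : ℝ} (hm0 : 0 ≤ m) (hm1 : m ≤ 1) (x y : ℝ) :
    |fm m x - fm m y| ≤ |x - y| := by
  have := Convex.norm_image_sub_le_of_norm_hasDerivWithin_le
    (f := fm m) (f' := fun z => 1 - fm m z ^ 2) (s := Set.univ)
    (fun z _ => (hasDerivAt_fm hm0 hm1 z).hasDerivWithinAt)
    (fun z _ => by
      have h1 : fm m z ^ 2 ≤ 1 := (sq_le_one_iff_abs_le_one _).mpr (abs_fm_le_one hm0 hm1 z)
      have h2 : (0:ℝ) ≤ fm m z ^ 2 := sq_nonneg _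
      show ‖1 - fm m z ^ 2‖ ≤ 1
      rw [Real.norm_eq_abs, abs_of_nonneg (by linarith)]
      linarith)
    convex_univ (Set.mem_univ y) (Set.mem_univ x)
  simpa using this

lemma abs_m_le_on {z t : ℝ} (ht : t ∈ Set.uIcc 0 z) : |t| ≤ |z| := by
  rcases Set.mem_uIcc.mp ht with ⟨h1, h2⟩ | ⟨h1, h2⟩
  · rw [abs_of_nonneg h1, abs_of_nonneg (le_trans h1 h2)]; exact h2
  · rw [abs_of_nonpos h2, abs_of_nonpos (le_trans h1 h2)]; linarith

lemma fm_taylor {m : ℝ} (hm0 : 0 ≤ m) (hm1 : m ≤ 1) (z : ℝ) :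
    |fm m z - m - (1 - m ^ 2) * z| ≤ 2 * z ^ 2 := by
  set u : ℝ → ℝ := fun t => fm m t - (1 - m ^ 2) * t with hu
  have hdu : ∀ t, HasDerivAt u (m ^ 2 - fm m t ^ 2) t := by
    intro t
    have h2 : HasDerivAt (fun y : ℝ => (1 - m ^ 2) * y) (1 - m ^ 2) t := by
      simpa using (hasDerivAt_id t).const_mul (1 - m ^ 2)
    have := (hasDerivAt_fm hm0 hm1 t).sub h2
    refine this.congr_deriv ?_
    ring
  have key := Convex.norm_image_sub_le_of_norm_hasDerivWithin_le
    (f := u) (f' := fun t => m ^ 2 - fm m t ^ 2) (s := Set.uIcc 0 z)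
    (fun t _ => (hdu t).hasDerivWithinAt)
    (fun t ht => by
      show ‖m ^ 2 - fm m t ^ 2‖ ≤ 2 * |z|
      have h1 : |m - fm m t| ≤ |t| := by
        have := fm_lip hm0 hm1 0 t
        rw [fm_zero] at this
        simpa using this
      have h2 : |m + fm m t| ≤ 2 := by
        have := abs_fm_le_one hm0 hm1 t
        have hm : |m| ≤ 1 := by rw [abs_of_nonneg hm0]; exact hm1
        calc |m + fm m t| ≤ |m| + |fm m t| := abs_add_le _ _
          _ ≤ 2 := by linarith
      have h3 : |t| ≤ |z| := abs_m_le_on ht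
      have : ‖m ^ 2 - fm m t ^ 2‖ = |m - fm m t| * |m + fm m t| := by
        rw [Real.norm_eq_abs, ← abs_mul]
        ring_nf
      rw [this]
      calc |m - fm m t| * |m + fm m t| ≤ |t| * 2 :=
            mul_le_mul h1 h2 (abs_nonneg _) (abs_nonneg _)
        _ ≤ 2 * |z| := by linarith)
    (convex_uIcc 0 z) (Set.left_mem_uIcc) (Set.right_mem_uIcc)
  have hz : (2 * |z|) * ‖z - 0‖ = 2 * z ^ 2 := by
    rw [Real.norm_eq_abs, sub_zero]
    rw [show 2 * |z| * |z| = 2 * (|z| * |z|) by ring, abs_mul_abs_self]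
    ring
  rw [hz] at key
  have : u z - u 0 = fm m z - (1 - m ^ 2) * z - m := by
    simp [hu, fm_zero]
  rw [Real.norm_eq_abs, this] at key
  convert key using 2
  ring

lemma phi_zero (m : ℝ) : phi m 0 = 0 := by simp [phi, FF]

lemma abs_phi_le {m : ℝ} (hm0 : 0 ≤ m) (hm1 : m ≤ 1) (z : ℝ) :
    |phi m z| ≤ 2 * |z| ^ 3 := by
  have key := Convex.norm_image_sub_le_of_norm_hasDerivWithin_le
    (f := phi m) (f' := fun t => fm m t - m - (1 - m ^ 2) * t) (s := Set.uIcc 0 z)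
    (fun t _ => (hasDerivAt_phi hm0 hm1 t).hasDerivWithinAt)
    (fun t ht => by
      show ‖fm m t - m - (1 - m ^ 2) * t‖ ≤ 2 * z ^ 2
      rw [Real.norm_eq_abs]
      calc |fm m t - m - (1 - m ^ 2) * t| ≤ 2 * t ^ 2 := fm_taylor hm0 hm1 t
        _ ≤ 2 * z ^ 2 := by
            have := abs_m_le_on ht
            nlinarith [abs_nonneg t, abs_nonneg z, sq_abs t, sq_abs z])
    (convex_uIcc 0 z) (Set.left_mem_uIcc) (Set.right_mem_uIcc)
  rw [phi_zero, sub_zero, Real.norm_eq_abs, Real.norm_eq_abs, sub_zero] at key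
  calc |phi m z| ≤ 2 * z ^ 2 * |z| := key
    _ = 2 * |z| ^ 3 := by rw [← sq_abs]; ring

lemma phi_le {m : ℝ} (hm0 : 0 ≤ m) (hm1 : m ≤ 1) (z : ℝ) :
    phi m z ≤ m ^ 2 * z ^ 2 / 2 := by
  set ψ : ℝ → ℝ := fun t => m ^ 2 * t ^ 2 / 2 - phi m t with hψ
  have hdψ : ∀ t, HasDerivAt ψ (t + m - fm m t) t := by
    intro t
    have h1 : HasDerivAt (fun y : ℝ => m ^ 2 * y ^ 2 / 2) (m ^ 2 * t) t := by
      have := (hasDerivAt_pow 2 t).const_mul (m ^ 2 / 2)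
      convert this using 1
      · rfl
      · rfl
      · funext y; ring
      · push_cast; ring
    have := h1.sub (hasDerivAt_phi hm0 hm1 t)
    refine this.congr_deriv ?_
    ring
  have hdiff : Differentiable ℝ ψ := fun t => (hdψ t).differentiableAt
  have hψ0 : ψ 0 = 0 := by simp [hψ, phi_zero]
  have hkey : ∀ t, 0 ≤ t → fm m t - m ≤ t := by
    intro t ht
    have := fm_lip hm0 hm1 t 0
    rw [fm_zero, sub_zero, abs_of_nonneg ht] at this
    calc fm m t - m ≤ |fm m t - m| := le_abs_self _
      _ ≤ t := this
  have hkey' : ∀ t, t ≤ 0 → m - fm m t ≤ -t := by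
    intro t ht
    have := fm_lip hm0 hm1 0 t
    rw [fm_zero, zero_sub, abs_neg, abs_of_nonpos ht] at this
    calc m - fm m t ≤ |m - fm m t| := le_abs_self _
      _ ≤ -t := this
  rcases le_total 0 z with hz | hz
  · have hmono := monotoneOn_of_deriv_nonneg (convex_Icc 0 z)
      hdiff.continuous.continuousOn hdiff.differentiableOn
      (fun t ht => by
        rw [(hdψ t).deriv]
        rw [interior_Icc] at ht
        have := hkey t ht.1.le
        linarith)
    have := hmono (Set.left_mem_Icc.mpr hz) (Set.right_mem_Icc.mpr hz) hz
    rw [hψ0] at this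
    simp only [hψ] at this
    linarith
  · have hmono := antitoneOn_of_deriv_nonpos (convex_Icc z 0)
      hdiff.continuous.continuousOn hdiff.differentiableOn
      (fun t ht => by
        rw [(hdψ t).deriv]
        rw [interior_Icc] at ht
        have := hkey' t ht.2.le
        linarith)
    have := hmono (Set.left_mem_Icc.mpr hz) (Set.right_mem_Icc.mpr hz) hz
    rw [hψ0] at this
    simp only [hψ] at this
    linarith

lemma tanh_sq_nonneg (h : ℝ) : 0 ≤ Real.tanh h ^ 2 := sq_nonneg _

lemma tanh_eq_fm_zero (h : ℝ) : Real.tanh h = fm 0 h := by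
  simp [fm, SS, FF, Real.tanh_eq_sinh_div_cosh]

lemma abs_tanh_le_abs (h : ℝ) : |Real.tanh h| ≤ |h| := by
  have := fm_lip (m := 0) le_rfl zero_le_one h 0
  rw [fm_zero, sub_zero, sub_zero] at this
  rw [tanh_eq_fm_zero]
  exact this

lemma abs_tanh_le_one (h : ℝ) : |Real.tanh h| ≤ 1 := by
  rw [tanh_eq_fm_zero]; exact abs_fm_le_one le_rfl zero_le_one h

lemma tanh_sq_le_one (h : ℝ) : Real.tanh h ^ 2 ≤ 1 :=
  (sq_le_one_iff_abs_le_one _).mpr (abs_tanh_le_one h)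

lemma tanh_sq_le_sq (h : ℝ) : Real.tanh h ^ 2 ≤ h ^ 2 := by
  have := abs_tanh_le_abs h
  nlinarith [abs_nonneg (Real.tanh h), abs_nonneg h, sq_abs (Real.tanh h), sq_abs h]

/-- The reweighting factor equals `exp (phi m z)` with `m = tanh h ^ 2`. -/
lemma g_eq (h z : ℝ) :
    (Real.cosh z + Real.sinh h ^ 2 * Real.exp z) /
      ((1 + Real.sinh h ^ 2) * Real.exp (Real.tanh h ^ 2 * z) *
        Real.exp (z ^ 2 / 2 * (1 - Real.tanh h ^ 4))) =
      Real.exp (phi (Real.tanh h ^ 2) z) := by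
  set m := Real.tanh h ^ 2 with hm
  have hch := Real.cosh_pos (x := h)
  have hcs := Real.cosh_sq h
  have he3 : Real.cosh h ^ 2 * m = Real.sinh h ^ 2 := by
    rw [hm, Real.tanh_eq_sinh_div_cosh]
    field_simp
  have hnum : Real.cosh z + Real.sinh h ^ 2 * Real.exp z = Real.cosh h ^ 2 * FF m z := by
    rw [FF, ← Real.cosh_add_sinh z]
    linear_combination (-Real.cosh z) * hcs - Real.sinh z * he3
  have hden1 : 1 + Real.sinh h ^ 2 = Real.cosh h ^ 2 := by linarith
  have hFpos := FF_pos (z := z) (tanh_sq_nonneg h) (tanh_sq_le_one h)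
  have hm4 : Real.tanh h ^ 4 = m ^ 2 := by rw [hm]; ring
  rw [hnum, hden1, hm4, phi]
  rw [show Real.log (FF m z) - m * z - (1 - m ^ 2) / 2 * z ^ 2
      = Real.log (FF m z) - (m * z + (1 - m ^ 2) / 2 * z ^ 2) by ring]
  rw [Real.exp_sub, Real.exp_log hFpos, Real.exp_add]
  rw [show z ^ 2 / 2 * (1 - m ^ 2) = (1 - m ^ 2) / 2 * z ^ 2 by ring]
  field_simp
  ring

/-- `|exp t - 1| ≤ |t| * exp M` whenever `t ≤ M`, `0 ≤ M`. -/
lemma abs_exp_sub_one_le {t M : ℝ} (ht : t ≤ M) (hM : 0 ≤ M) :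
    |Real.exp t - 1| ≤ |t| * Real.exp M := by
  rcases le_total 0 t with h | h
  · rw [abs_of_nonneg (by linarith [Real.one_le_exp h]), abs_of_nonneg h]
    have h1 := Real.add_one_le_exp (-t)
    have h2 := Real.exp_pos t
    have h3 : Real.exp (-t) * Real.exp t = 1 := by
      rw [← Real.exp_add]; simp
    have h4 : Real.exp t ≤ Real.exp M := Real.exp_le_exp.mpr ht
    nlinarith
  · have h1 := Real.add_one_le_exp t
    have h2 : Real.exp t ≤ 1 := Real.exp_le_one_iff.mpr h
    have h3 : (1:ℝ) ≤ Real.exp M := Real.one_le_exp hM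
    rw [abs_of_nonpos (by linarith), abs_of_nonpos h]
    nlinarith

lemma continuous_phi {m : ℝ} (hm0 : 0 ≤ m) (hm1 : m ≤ 1) : Continuous (phi m) := by
  have hFF : Continuous (FF m) :=
    Real.continuous_cosh.add (continuous_const.mul Real.continuous_sinh)
  have hlog : Continuous fun z => Real.log (FF m z) :=
    hFF.log fun z => (FF_pos hm0 hm1 z).ne'
  exact (hlog.sub (continuous_const.mul continuous_id)).sub
    (continuous_const.mul (continuous_pow 2))

lemma integrable_gauss_aux {g : ℝ → ℝ}
    (hg : Integrable (fun x => gaussianPDFReal 0 1 x * g x) volume) :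
    Integrable g (gaussianReal 0 1) := by
  rw [gaussianReal_of_var_ne_zero 0 one_ne_zero]
  have hm : Measurable fun x => (gaussianPDFReal 0 1 x).toNNReal :=
    (measurable_gaussianPDFReal 0 1).real_toNNReal
  have hpdf : gaussianPDF 0 1 = fun x => (((gaussianPDFReal 0 1 x).toNNReal : NNReal) : ENNReal) := rfl
  rw [hpdf, integrable_withDensity_iff_integrable_smul hm]
  refine hg.congr (Filter.Eventually.of_forall fun x => ?_)
  show gaussianPDFReal 0 1 x * g x = (gaussianPDFReal 0 1 x).toNNReal • g x
  rw [NNReal.smul_def, smul_eq_mul, Real.coe_toNNReal _ (gaussianPDFReal_nonneg 0 1 x)]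

lemma pdf_one (x : ℝ) :
    gaussianPDFReal 0 1 x = (Real.sqrt (2 * Real.pi))⁻¹ * Real.exp (-(x ^ 2) / 2) := by
  rw [gaussianPDFReal_def]
  push_cast
  norm_num

lemma integrable_exp_quarter :
    Integrable (fun x : ℝ => Real.exp (x ^ 2 / 4)) (gaussianReal 0 1) := by
  apply integrable_gauss_aux
  have base : Integrable (fun x : ℝ => Real.exp (-(4⁻¹ : ℝ) * x ^ 2)) volume :=
    integrable_exp_neg_mul_sq (by norm_num)
  have hfun : (fun x : ℝ => gaussianPDFReal 0 1 x * Real.exp (x ^ 2 / 4))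
      = fun x : ℝ => (Real.sqrt (2 * Real.pi))⁻¹ * Real.exp (-(4⁻¹ : ℝ) * x ^ 2) := by
    funext x
    rw [pdf_one, mul_assoc, ← Real.exp_add]
    ring_nf
  rw [hfun]
  exact base.const_mul _

lemma integrable_cube_exp_quarter :
    Integrable (fun x : ℝ => |x| ^ 3 * Real.exp (x ^ 2 / 4)) (gaussianReal 0 1) := by
  apply integrable_gauss_aux
  have base : Integrable (fun x : ℝ => x ^ (3 : ℝ) * Real.exp (-(4⁻¹ : ℝ) * x ^ 2)) volume :=
    integrable_rpow_mul_exp_neg_mul_sq (by norm_num) (by norm_num)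
  have base2 : Integrable (fun x : ℝ => |x| ^ 3 * Real.exp (-(4⁻¹ : ℝ) * x ^ 2)) volume := by
    have hfun : (fun x : ℝ => |x| ^ 3 * Real.exp (-(4⁻¹ : ℝ) * x ^ 2))
        = fun x : ℝ => |x ^ (3 : ℝ) * Real.exp (-(4⁻¹ : ℝ) * x ^ 2)| := by
      funext x
      rw [abs_mul, Real.abs_exp, show (3:ℝ) = ((3:ℕ):ℝ) by norm_num, Real.rpow_natCast, abs_pow]
    rw [hfun]
    exact base.abs
  have hfun : (fun x : ℝ => gaussianPDFReal 0 1 x * (|x| ^ 3 * Real.exp (x ^ 2 / 4)))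
      = fun x : ℝ => (Real.sqrt (2 * Real.pi))⁻¹ * (|x| ^ 3 * Real.exp (-(4⁻¹ : ℝ) * x ^ 2)) := by
    funext x
    rw [pdf_one]
    rw [show (Real.sqrt (2*Real.pi))⁻¹ * Real.exp (-(x^2)/2) * (|x|^3 * Real.exp (x^2/4))
        = (Real.sqrt (2*Real.pi))⁻¹ * (|x|^3 * (Real.exp (-(x^2)/2) * Real.exp (x^2/4))) from by ring]
    rw [← Real.exp_add]
    ring_nf
  rw [hfun]
  exact base2.const_mul _

lemma gauss_map {β : ℝ} {N : ℕ} (hN : 1 ≤ N) (hβ : 0 < β) :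
    gaussianReal 0 (Real.toNNReal (β ^ 2 / N)) =
      (gaussianReal 0 1).map (fun x => (β / Real.sqrt N) * x) := by
  have hNpos : (0:ℝ) < N := by exact_mod_cast hN
  have := gaussianReal_map_const_mul (μ := 0) (v := 1) (β / Real.sqrt N)
  rw [mul_zero] at this
  rw [show (fun x : ℝ => (β / Real.sqrt N) * x) = ((β / Real.sqrt N) * ·) from rfl, this]
  congr 1
  ext
  rw [NNReal.coe_mul, NNReal.coe_one, mul_one]
  rw [Real.coe_toNNReal _ (by positivity), NNReal.coe_mk, div_pow, Real.sq_sqrt hNpos.le]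


end Stmt11Aux

open Stmt11Aux

set_option maxHeartbeats 1000000

/-- Control of the reweighting factor: for `β ∈ (0,1)` and `α > 1/4`,
for every `η > 0` there is `N₀` such that for all `N ≥ N₀` and `0 ≤ h ≤ N^{−α}`,
`|E_{z ~ N(0, β²/N)}[g_N(z)^{2N}] − 1| ≤ η`, where
`g_N(z) = (cosh z + sinh²(h) e^z)/((1 + sinh²(h)) e^{tanh²(h) z} e^{(z²/2)(1 − tanh⁴ h)})`. -/
theorem stmt11 (β α : ℝ) (hβ0 : 0 < β) (hβ1 : β < 1) (hα : 1 / 4 < α) :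
    ∀ η : ℝ, 0 < η → ∃ N0 : ℕ, ∀ N : ℕ, N0 ≤ N → ∀ h : ℝ, 0 ≤ h → h ≤ (N : ℝ) ^ (-α) →
      |(∫ z, ((Real.cosh z + Real.sinh h ^ 2 * Real.exp z) /
            ((1 + Real.sinh h ^ 2) * Real.exp (Real.tanh h ^ 2 * z) *
              Real.exp (z ^ 2 / 2 * (1 - Real.tanh h ^ 4)))) ^ (2 * N)
          ∂gaussianReal 0 (Real.toNNReal (β ^ 2 / N))) - 1| ≤ η := by
  intro η hη
  set γ : Measure ℝ := gaussianReal 0 1 with hγ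
  set K : ℝ := ∫ x, |x| ^ 3 * Real.exp (x ^ 2 / 4) ∂γ with hK
  have hK0 : 0 ≤ K := integral_nonneg fun x => by positivity
  refine ⟨max 4 (⌈(4 * K / η) ^ 2⌉₊ + 1), ?_⟩
  intro N hN h hh0 hh1
  have hN4 : 4 ≤ N := le_trans (le_max_left _ _) hN
  have hN1 : 1 ≤ N := by omega
  have hNR : (4:ℝ) ≤ (N:ℝ) := by exact_mod_cast hN4
  have hNpos : (0:ℝ) < (N:ℝ) := by linarith
  have hN1R : (1:ℝ) ≤ (N:ℝ) := by linarith
  have hsqrtpos : 0 < Real.sqrt N := Real.sqrt_pos.mpr hNpos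
  set m : ℝ := Real.tanh h ^ 2 with hm
  have hm0 : 0 ≤ m := tanh_sq_nonneg h
  have hm1 : m ≤ 1 := tanh_sq_le_one h
  set σ : ℝ := β / Real.sqrt N with hσ
  have hσpos : 0 < σ := div_pos hβ0 hsqrtpos
  have hσsq : σ ^ 2 = β ^ 2 / N := by rw [hσ, div_pow, Real.sq_sqrt hNpos.le]
  -- bound on m
  have hm2 : m ^ 2 * β ^ 2 ≤ 4⁻¹ := by
    have e1 : m ≤ h ^ 2 := tanh_sq_le_sq h
    have e2 : m ^ 2 ≤ h ^ 4 := by nlinarith [tanh_sq_nonneg h, sq_nonneg h]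
    have e3 : h ^ 4 ≤ ((N:ℝ) ^ (-α)) ^ 4 := pow_le_pow_left₀ hh0 hh1 4
    have e4 : ((N:ℝ) ^ (-α)) ^ 4 = (N:ℝ) ^ ((-α) * 4) := by
      rw [← Real.rpow_natCast ((N:ℝ) ^ (-α)) 4, ← Real.rpow_mul hNpos.le]
      norm_num
    have e5 : (N:ℝ) ^ ((-α) * 4) ≤ (N:ℝ) ^ (-1:ℝ) :=
      Real.rpow_le_rpow_of_exponent_le hN1R (by linarith)
    have e6 : (N:ℝ) ^ (-1:ℝ) = ((N:ℝ))⁻¹ := Real.rpow_neg_one _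
    have e7 : ((N:ℝ))⁻¹ ≤ 4⁻¹ := by
      rw [inv_le_inv₀ hNpos (by norm_num)]
      exact hNR
    have e8 : β ^ 2 ≤ 1 := by nlinarith
    have : m ^ 2 ≤ 4⁻¹ := by
      calc m ^ 2 ≤ h ^ 4 := e2
        _ ≤ ((N:ℝ) ^ (-α)) ^ 4 := e3
        _ = (N:ℝ) ^ ((-α) * 4) := e4
        _ ≤ (N:ℝ) ^ (-1:ℝ) := e5
        _ = ((N:ℝ))⁻¹ := e6
        _ ≤ 4⁻¹ := e7
    nlinarith [sq_nonneg m]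
  set c₁ : ℝ := 2 * (N:ℝ) with hc₁
  have hc₁0 : (0:ℝ) ≤ c₁ := by positivity
  -- rewrite the integrand
  have hfun : (fun z => ((Real.cosh z + Real.sinh h ^ 2 * Real.exp z) /
        ((1 + Real.sinh h ^ 2) * Real.exp (Real.tanh h ^ 2 * z) *
          Real.exp (z ^ 2 / 2 * (1 - Real.tanh h ^ 4)))) ^ (2 * N))
      = fun z => Real.exp (c₁ * phi m z) := by
    funext z
    rw [g_eq, ← Real.exp_nat_mul]
    congr 1
    push_cast
    ring
  rw [hfun, gauss_map hN1 hβ0, ← hγ]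
  have hcont : Continuous fun z => Real.exp (c₁ * phi m z) :=
    Real.continuous_exp.comp (continuous_const.mul (continuous_phi hm0 hm1))
  rw [integral_map (measurable_const_mul σ).aemeasurable hcont.aestronglyMeasurable]
  -- pointwise bounds
  have hbound : ∀ x : ℝ, c₁ * phi m (σ * x) ≤ x ^ 2 / 4 := by
    intro x
    have h1 : phi m (σ * x) ≤ m ^ 2 * (σ * x) ^ 2 / 2 := phi_le hm0 hm1 _
    have h2 : c₁ * phi m (σ * x) ≤ c₁ * (m ^ 2 * (σ * x) ^ 2 / 2) :=
      mul_le_mul_of_nonneg_left h1 hc₁0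
    have h3 : c₁ * (m ^ 2 * (σ * x) ^ 2 / 2) = (m ^ 2 * β ^ 2) * x ^ 2 := by
      have : σ ^ 2 * (N:ℝ) = β ^ 2 := by
        rw [hσsq]; field_simp
      rw [hc₁]; linear_combination (m ^ 2 * x ^ 2) * this
    rw [h3] at h2
    have h4 : (m ^ 2 * β ^ 2) * x ^ 2 ≤ 4⁻¹ * x ^ 2 :=
      mul_le_mul_of_nonneg_right hm2 (sq_nonneg x)
    calc c₁ * phi m (σ * x) ≤ (m ^ 2 * β ^ 2) * x ^ 2 := h2
      _ ≤ 4⁻¹ * x ^ 2 := h4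
      _ = x ^ 2 / 4 := by ring
  have habs : ∀ x : ℝ, |c₁ * phi m (σ * x)| ≤ (4 * (N:ℝ) * σ ^ 3) * |x| ^ 3 := by
    intro x
    rw [abs_mul, abs_of_nonneg hc₁0]
    have h1 : |phi m (σ * x)| ≤ 2 * |σ * x| ^ 3 := abs_phi_le hm0 hm1 _
    have h2 : |σ * x| ^ 3 = σ ^ 3 * |x| ^ 3 := by
      rw [abs_mul, abs_of_pos hσpos, mul_pow]
    calc c₁ * |phi m (σ * x)| ≤ c₁ * (2 * |σ * x| ^ 3) :=
          mul_le_mul_of_nonneg_left h1 hc₁0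
      _ = (4 * (N:ℝ) * σ ^ 3) * |x| ^ 3 := by rw [h2, hc₁]; ring
  have hpt : ∀ x : ℝ, |Real.exp (c₁ * phi m (σ * x)) - 1|
      ≤ (4 * (N:ℝ) * σ ^ 3) * (|x| ^ 3 * Real.exp (x ^ 2 / 4)) := by
    intro x
    calc |Real.exp (c₁ * phi m (σ * x)) - 1|
        ≤ |c₁ * phi m (σ * x)| * Real.exp (x ^ 2 / 4) :=
          abs_exp_sub_one_le (hbound x) (by positivity)
      _ ≤ ((4 * (N:ℝ) * σ ^ 3) * |x| ^ 3) * Real.exp (x ^ 2 / 4) :=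
          mul_le_mul_of_nonneg_right (habs x) (Real.exp_pos _).le
      _ = (4 * (N:ℝ) * σ ^ 3) * (|x| ^ 3 * Real.exp (x ^ 2 / 4)) := by ring
  have hpt2 : ∀ x : ℝ, ‖Real.exp (c₁ * phi m (σ * x))‖ ≤ Real.exp (x ^ 2 / 4) := by
    intro x
    rw [Real.norm_eq_abs, Real.abs_exp]
    exact Real.exp_le_exp.mpr (hbound x)
  -- integrability
  have hmeas2 : AEStronglyMeasurable (fun x => Real.exp (c₁ * phi m (σ * x))) γ :=
    (hcont.comp (continuous_const.mul continuous_id)).aestronglyMeasurable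
  have hint : Integrable (fun x => Real.exp (c₁ * phi m (σ * x))) γ :=
    integrable_exp_quarter.mono' hmeas2 (Filter.Eventually.of_forall hpt2)
  have hint1 : ∫ x, (1:ℝ) ∂γ = 1 := by simp
  have key : |∫ x, Real.exp (c₁ * phi m (σ * x)) ∂γ - 1| ≤ (4 * (N:ℝ) * σ ^ 3) * K := by
    have e1 : ∫ x, Real.exp (c₁ * phi m (σ * x)) ∂γ - 1
        = ∫ x, (Real.exp (c₁ * phi m (σ * x)) - 1) ∂γ := by
      rw [integral_sub hint (integrable_const 1), hint1]
    rw [e1]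
    calc |∫ x, (Real.exp (c₁ * phi m (σ * x)) - 1) ∂γ|
        ≤ ∫ x, |Real.exp (c₁ * phi m (σ * x)) - 1| ∂γ := by
          simpa [Real.norm_eq_abs] using
            norm_integral_le_integral_norm (fun x => Real.exp (c₁ * phi m (σ * x)) - 1) (μ := γ)
      _ ≤ ∫ x, (4 * (N:ℝ) * σ ^ 3) * (|x| ^ 3 * Real.exp (x ^ 2 / 4)) ∂γ := by
          refine integral_mono (hint.sub (integrable_const 1)).abs
            (integrable_cube_exp_quarter.const_mul _) hpt
      _ = (4 * (N:ℝ) * σ ^ 3) * K := by rw [MeasureTheory.integral_const_mul]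
  refine le_trans key ?_
  -- final numeric bound
  have hσ3 : 4 * (N:ℝ) * σ ^ 3 = 4 * β ^ 3 / Real.sqrt N := by
    rw [hσ, div_pow]
    have : Real.sqrt N ^ 3 = (N:ℝ) * Real.sqrt N := by
      rw [pow_succ, Real.sq_sqrt hNpos.le]
    rw [this]
    field_simp
  have hβ3 : β ^ 3 ≤ 1 := by nlinarith
  have hTle : (4 * K / η) ^ 2 ≤ (N:ℝ) := by
    have h1 : ((4 * K / η) ^ 2 : ℝ) ≤ ⌈(4 * K / η) ^ 2⌉₊ := Nat.le_ceil _
    have h2 : (⌈(4 * K / η) ^ 2⌉₊ + 1 : ℕ) ≤ N := le_trans (le_max_right _ _) hN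
    have h3 : ((⌈(4 * K / η) ^ 2⌉₊ : ℝ) + 1) ≤ (N:ℝ) := by exact_mod_cast h2
    linarith
  have hsqT : 4 * K / η ≤ Real.sqrt N := by
    have := Real.sqrt_le_sqrt hTle
    rwa [Real.sqrt_sq (by positivity)] at this
  have hfinal : 4 * K ≤ η * Real.sqrt N := by
    have := mul_le_mul_of_nonneg_left hsqT hη.le
    rw [mul_div_cancel₀ _ (ne_of_gt hη)] at this
    linarith
  rw [hσ3]
  rw [div_mul_eq_mul_div, div_le_iff₀ hsqrtpos]
  calc 4 * β ^ 3 * K ≤ 4 * K := by nlinarith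
    _ ≤ η * Real.sqrt N := hfinal
end
end

section
/- For all real numbers a, b > 0, with g ~ N(0,1) a standard Gaussian: 2a·E[ sech²(a·g + b)·tanh(a·g + b) ] = −E[ g·sech²(a·g + b) ], and this common value is strictly positive. -/
open MeasureTheory ProbabilityTheory

noncomputable section

open Real Set Filter Topology
open scoped NNReal ENNReal

lemma pdf_eq (x : ℝ) : gaussianPDFReal 0 1 x = (Real.sqrt (2*Real.pi))⁻¹ * Real.exp (-x^2/2) := by
  simp [gaussianPDFReal]

lemma integral_stdGaussian (f : ℝ → ℝ) :
    ∫ g, f g ∂stdGaussian = ∫ x, f x * gaussianPDFReal 0 1 x := by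
  rw [_root_.stdGaussian, gaussianReal_of_var_ne_zero _ one_ne_zero]
  have h : (gaussianPDF 0 1) = fun x => ((Real.toNNReal (gaussianPDFReal 0 1 x) : ℝ≥0) : ℝ≥0∞) := rfl
  rw [h, integral_withDensity_eq_integral_smul ((measurable_gaussianPDFReal 0 1).real_toNNReal)]
  congr 1; ext x
  simp [NNReal.smul_def, Real.coe_toNNReal _ (gaussianPDFReal_nonneg 0 1 x), mul_comm]

lemma reflect_Iic (c : ℝ) (ψ : ℝ → ℝ) :
    ∫ x in Set.Iic c, ψ x = ∫ x in Set.Ioi c, ψ (2*c - x) := by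
  have emb : MeasurableEmbedding (fun x : ℝ => x + 2*c) :=
    (Homeomorph.addRight (2*c)).isClosedEmbedding.measurableEmbedding
  have mp : MeasurePreserving (fun x : ℝ => x + 2*c) volume volume :=
    measurePreserving_add_right volume (2*c)
  have h1 : ∫ x in (fun x : ℝ => x + 2*c) ⁻¹' (Set.Iic c), ψ (x + 2*c) = ∫ y in Set.Iic c, ψ y :=
    mp.setIntegral_preimage_emb emb ψ (Set.Iic c)
  have hpre : (fun x : ℝ => x + 2*c) ⁻¹' (Set.Iic c) = Set.Iic (-c) := by
    ext x; simp [Set.mem_Iic]; constructor <;> intro h <;> linarith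
  rw [hpre] at h1
  rw [← h1]
  have h2 := integral_comp_neg_Ioi c (fun y => ψ (y + 2*c))
  rw [← h2]
  congr 1; ext x; ring_nf

lemma sech_pos (x : ℝ) : 0 < sech x := by
  unfold sech; positivity

lemma sech_le_one (x : ℝ) : sech x ≤ 1 := by
  unfold sech
  rw [div_le_one (Real.cosh_pos _)]
  exact Real.one_le_cosh x

lemma abs_tanh_le_one (x : ℝ) : |Real.tanh x| ≤ 1 := by
  rw [Real.tanh_eq_sinh_div_cosh, abs_div, abs_of_pos (Real.cosh_pos _), div_le_one (Real.cosh_pos _)]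
  nlinarith [Real.cosh_sq x, Real.cosh_pos x, abs_nonneg (Real.sinh x), sq_abs (Real.sinh x)]

lemma sech_neg (x : ℝ) : sech (-x) = sech x := by unfold sech; rw [Real.cosh_neg]

lemma continuous_sech : Continuous sech := by
  unfold sech
  exact continuous_const.div Real.continuous_cosh (fun x => (Real.cosh_pos _).ne')

lemma continuous_tanh' : Continuous Real.tanh := by
  have : Real.tanh = fun x => Real.sinh x / Real.cosh x := funext Real.tanh_eq_sinh_div_cosh
  rw [this]
  exact Real.continuous_sinh.div Real.continuous_cosh (fun x => (Real.cosh_pos _).ne')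

lemma hasDerivAt_pdf (x : ℝ) :
    HasDerivAt (gaussianPDFReal 0 1) (-x * gaussianPDFReal 0 1 x) x := by
  have h : gaussianPDFReal 0 1 = fun x => (Real.sqrt (2*Real.pi))⁻¹ * Real.exp (-x^2/2) :=
    funext pdf_eq
  rw [h]
  have h1 : HasDerivAt (fun x : ℝ => -x^2/2) (-x) x := by
    have := ((hasDerivAt_pow 2 x).neg.div_const 2)
    refine this.congr_deriv ?_
    simp; ring
  have h2 := (h1.exp).const_mul (Real.sqrt (2*Real.pi))⁻¹
  refine h2.congr_deriv ?_
  ring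

lemma hasDerivAt_H (a b x : ℝ) :
    HasDerivAt (fun x => sech (a*x+b)^2 * gaussianPDFReal 0 1 x)
      ((-(2*a)) * (sech (a*x+b)^2 * Real.tanh (a*x+b) * gaussianPDFReal 0 1 x)
        + (-(x * sech (a*x+b)^2 * gaussianPDFReal 0 1 x))) x := by
  have hu : HasDerivAt (fun x => a*x+b) a x := by
    simpa using ((hasDerivAt_id x).const_mul a).add_const b
  have hcosh : HasDerivAt (fun x => Real.cosh (a*x+b)) (Real.sinh (a*x+b) * a) x := hu.cosh
  have hinv : HasDerivAt (fun x => (Real.cosh (a*x+b))⁻¹)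
      (-(Real.sinh (a*x+b) * a) / (Real.cosh (a*x+b))^2) x := hcosh.inv (Real.cosh_pos _).ne'
  have hF : HasDerivAt (fun x => ((Real.cosh (a*x+b))⁻¹)^2)
      (2 * ((Real.cosh (a*x+b))⁻¹)^1 * (-(Real.sinh (a*x+b) * a) / (Real.cosh (a*x+b))^2)) x :=
    hinv.pow 2
  have hP := hasDerivAt_pdf x
  have := hF.mul hP
  have hsech : (fun x => sech (a*x+b)^2 * gaussianPDFReal 0 1 x)
      = fun x => ((Real.cosh (a*x+b))⁻¹)^2 * gaussianPDFReal 0 1 x := by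
    funext y; unfold sech; rw [one_div]
  rw [hsech]
  refine this.congr_deriv ?_
  unfold sech
  rw [Real.tanh_eq_sinh_div_cosh]
  have hc := (Real.cosh_pos (a*x+b)).ne'
  field_simp

lemma tendsto_pdf_atTop : Tendsto (gaussianPDFReal 0 1) atTop (𝓝 0) := by
  have h : gaussianPDFReal 0 1 = fun x => (Real.sqrt (2*Real.pi))⁻¹ * Real.exp (-x^2/2) :=
    funext pdf_eq
  rw [h, ← mul_zero ((Real.sqrt (2*Real.pi))⁻¹)]
  apply Tendsto.const_mul
  apply Real.tendsto_exp_atBot.comp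
  have : Tendsto (fun x : ℝ => (-(1:ℝ)/2) * x^2) atTop atBot :=
    (tendsto_pow_atTop two_ne_zero).const_mul_atTop_of_neg (by norm_num)
  exact this.congr (fun x => by ring)

lemma tendsto_pdf_atBot : Tendsto (gaussianPDFReal 0 1) atBot (𝓝 0) := by
  have h : ∀ x, gaussianPDFReal 0 1 x = gaussianPDFReal 0 1 (-(-x)) := fun x => by simp
  have := tendsto_pdf_atTop.comp (tendsto_neg_atBot_atTop)
  apply this.congr
  intro x; simp [pdf_eq]

lemma tendsto_H (a b : ℝ) (l : Filter ℝ)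
    (hl : Tendsto (gaussianPDFReal 0 1) l (𝓝 0)) :
    Tendsto (fun x => sech (a*x+b)^2 * gaussianPDFReal 0 1 x) l (𝓝 0) := by
  apply squeeze_zero (fun x => mul_nonneg (sq_nonneg _) (gaussianPDFReal_nonneg 0 1 x))
    (fun x => ?_) hl
  have h1 : sech (a*x+b)^2 ≤ 1 := by
    have := sech_le_one (a*x+b); have := sech_pos (a*x+b); nlinarith
  have h2 := gaussianPDFReal_nonneg 0 1 x
  nlinarith

lemma integrable_pdf : Integrable (gaussianPDFReal 0 1) := integrable_gaussianPDFReal 0 1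

lemma integrable_x_pdf : Integrable (fun x => x * gaussianPDFReal 0 1 x) := by
  have h := (integrable_mul_exp_neg_mul_sq (b := 1/2) (by norm_num)).const_mul
    (Real.sqrt (2*Real.pi))⁻¹
  apply h.congr
  filter_upwards with x
  rw [pdf_eq]; ring_nf

lemma integrable_bdd_pdfmul (φ : ℝ → ℝ) (hφ : Continuous φ) (C : ℝ) (hC : ∀ x, ‖φ x‖ ≤ C)
    (g : ℝ → ℝ) (hg : Integrable g) : Integrable (fun x => φ x * g x) :=
  hg.bdd_mul hφ.aestronglyMeasurable (ae_of_all _ hC)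

lemma ibp (a b : ℝ) (ha : 0 < a) :
    2 * a * (∫ x, sech (a*x+b)^2 * Real.tanh (a*x+b) * gaussianPDFReal 0 1 x)
      = -∫ x, x * sech (a*x+b)^2 * gaussianPDFReal 0 1 x := by
  set P := gaussianPDFReal 0 1 with hP
  have hT : Continuous (fun x => sech (a*x+b)^2 * Real.tanh (a*x+b)) := by
    apply Continuous.mul
    · exact ((continuous_sech.comp (by continuity)).pow 2)
    · exact continuous_tanh'.comp (by continuity)
  have hTbd : ∀ x, ‖sech (a*x+b)^2 * Real.tanh (a*x+b)‖ ≤ 1 := by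
    intro x
    rw [norm_mul, Real.norm_eq_abs, Real.norm_eq_abs]
    have h1 := sech_pos (a*x+b); have h2 := sech_le_one (a*x+b)
    have h3 := abs_tanh_le_one (a*x+b)
    have : |sech (a*x+b)^2| ≤ 1 := by rw [abs_of_pos (pow_pos (sech_pos _) 2)]; nlinarith
    nlinarith [abs_nonneg (Real.tanh (a*x+b)), abs_nonneg (sech (a*x+b)^2)]
  have hS : Continuous (fun x => sech (a*x+b)^2) := (continuous_sech.comp (by continuity)).pow 2
  have hSbd : ∀ x, ‖sech (a*x+b)^2‖ ≤ 1 := by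
    intro x
    rw [Real.norm_eq_abs, abs_of_pos (pow_pos (sech_pos _) 2)]
    have h1 := sech_pos (a*x+b); have h2 := sech_le_one (a*x+b); nlinarith
  have I1 : Integrable (fun x => sech (a*x+b)^2 * Real.tanh (a*x+b) * P x) :=
    integrable_bdd_pdfmul _ hT 1 hTbd _ integrable_pdf
  have I2 : Integrable (fun x => x * sech (a*x+b)^2 * P x) := by
    apply (integrable_bdd_pdfmul _ hS 1 hSbd _ integrable_x_pdf).congr
    filter_upwards with x; ring
  set D : ℝ → ℝ := fun x =>
    (-(2*a)) * (sech (a*x+b)^2 * Real.tanh (a*x+b) * P x)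
      + (-(x * sech (a*x+b)^2 * P x)) with hD
  have ID : Integrable D := ((I1.const_mul _).add I2.neg)
  have hderiv : ∀ x, HasDerivAt (fun x => sech (a*x+b)^2 * P x) (D x) x :=
    fun x => hasDerivAt_H a b x
  have htop : Tendsto (fun x => sech (a*x+b)^2 * P x) atTop (𝓝 0) :=
    tendsto_H a b _ tendsto_pdf_atTop
  have hbot : Tendsto (fun x => sech (a*x+b)^2 * P x) atBot (𝓝 0) :=
    tendsto_H a b _ tendsto_pdf_atBot
  have hIic : ∫ x in Iic (0:ℝ), D x = sech (a*0+b)^2 * P 0 - 0 :=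
    integral_Iic_of_hasDerivAt_of_tendsto ((hderiv 0).continuousAt.continuousWithinAt)
      (fun x _ => hderiv x) ID.integrableOn hbot
  have hIoi : ∫ x in Ioi (0:ℝ), D x = 0 - sech (a*0+b)^2 * P 0 :=
    integral_Ioi_of_hasDerivAt_of_tendsto ((hderiv 0).continuousAt.continuousWithinAt)
      (fun x _ => hderiv x) ID.integrableOn htop
  have hsum : ∫ x, D x = 0 := by
    rw [← intervalIntegral.integral_Iic_add_Ioi ID.integrableOn ID.integrableOn, hIic, hIoi]; ring
  have hsum' : ∫ x, ((-(2*a)) * (sech (a*x+b)^2 * Real.tanh (a*x+b) * P x)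
      + (-(x * sech (a*x+b)^2 * P x))) = 0 := hsum
  have I2n : Integrable (fun x => -(x * sech (a*x+b)^2 * P x)) := I2.neg
  rw [integral_add (I1.const_mul (-(2*a))) I2n, integral_const_mul, integral_neg] at hsum'
  linarith

lemma pos_part (a b : ℝ) (ha : 0 < a) (hb : 0 < b) :
    0 < ∫ x, sech (a*x+b)^2 * Real.tanh (a*x+b) * gaussianPDFReal 0 1 x := by
  set P := gaussianPDFReal 0 1 with hPdef
  set ψ : ℝ → ℝ := fun x => sech (a*x+b)^2 * Real.tanh (a*x+b) * P x with hψ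
  set c0 : ℝ := -b/a with hc0
  have hc0neg : c0 < 0 := by rw [hc0]; exact div_neg_of_neg_of_pos (by linarith) ha
  have hT : Continuous (fun x => sech (a*x+b)^2 * Real.tanh (a*x+b)) := by
    apply Continuous.mul
    · exact ((continuous_sech.comp (by continuity)).pow 2)
    · exact continuous_tanh'.comp (by continuity)
  have hTbd : ∀ x, ‖sech (a*x+b)^2 * Real.tanh (a*x+b)‖ ≤ 1 := by
    intro x
    rw [norm_mul, Real.norm_eq_abs, Real.norm_eq_abs]
    have h1 := sech_pos (a*x+b); have h2 := sech_le_one (a*x+b)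
    have h3 := abs_tanh_le_one (a*x+b)
    have : |sech (a*x+b)^2| ≤ 1 := by rw [abs_of_pos (pow_pos (sech_pos _) 2)]; nlinarith
    nlinarith [abs_nonneg (Real.tanh (a*x+b)), abs_nonneg (sech (a*x+b)^2)]
  have Iψ : Integrable ψ := integrable_bdd_pdfmul _ hT 1 hTbd _ integrable_pdf
  have Iψ' : Integrable (fun x => ψ (2*c0 - x)) := Iψ.comp_sub_left (2*c0)
  have hsplit : ∫ x, ψ x = (∫ x in Ioi c0, ψ (2*c0 - x)) + ∫ x in Ioi c0, ψ x := by
    rw [← intervalIntegral.integral_Iic_add_Ioi Iψ.integrableOn Iψ.integrableOn,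
      reflect_Iic c0 ψ]
  have hadd : (∫ x in Ioi c0, ψ (2*c0 - x)) + ∫ x in Ioi c0, ψ x
      = ∫ x in Ioi c0, (ψ (2*c0 - x) + ψ x) :=
    (integral_add Iψ'.integrableOn Iψ.integrableOn).symm
  have hpt : ∀ x ∈ Ioi c0, 0 < ψ (2*c0 - x) + ψ x := by
    intro x hx
    rw [mem_Ioi] at hx
    have hax : 0 < a*x+b := by
      have := (div_lt_iff₀ ha).mp (by rw [← hc0]; exact hx)
      nlinarith
    have hneg : a*(2*c0 - x)+b = -(a*x+b) := by
      rw [hc0]; field_simp; ring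
    have e : ψ (2*c0 - x) = -(sech (a*x+b)^2 * Real.tanh (a*x+b) * P (2*c0 - x)) := by
      rw [hψ]
      simp only
      rw [hneg, sech_neg, Real.tanh_neg]
      ring
    have hPlt : P (2*c0 - x) < P x := by
      rw [hPdef, pdf_eq, pdf_eq]
      have hsq : (2*c0 - x)^2 > x^2 := by nlinarith
      have : Real.exp (-(2*c0 - x)^2/2) < Real.exp (-x^2/2) := by
        apply Real.exp_lt_exp.2; linarith
      have hpos : (0:ℝ) < (Real.sqrt (2*Real.pi))⁻¹ := by positivity
      nlinarith
    have hTpos : 0 < sech (a*x+b)^2 * Real.tanh (a*x+b) := by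
      apply mul_pos (pow_pos (sech_pos _) 2)
      rw [Real.tanh_eq_sinh_div_cosh]
      exact div_pos (Real.sinh_pos_iff.2 hax) (Real.cosh_pos _)
    have eψ : ψ x = sech (a*x+b)^2 * Real.tanh (a*x+b) * P x := rfl
    nlinarith [mul_pos hTpos (sub_pos.2 hPlt)]
  have key : 0 < ∫ x in Ioi c0, (ψ (2*c0 - x) + ψ x) := by
    rw [setIntegral_pos_iff_support_of_nonneg_ae
      ((ae_restrict_iff' measurableSet_Ioi).2 (ae_of_all _ fun x hx => (hpt x hx).le))
      (Iψ'.add Iψ).integrableOn]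
    have hsub : Ioi c0 ⊆ Function.support (fun x => ψ (2*c0 - x) + ψ x) :=
      fun x hx => (hpt x hx).ne'
    rw [Set.inter_eq_self_of_subset_right hsub, Real.volume_Ioi]
    simp
  linarith [hsplit, hadd, key]


/-- For `a, b > 0`, with `g ~ N(0,1)`,
`2a · E[sech²(ag+b) tanh(ag+b)] = −E[g · sech²(ag+b)]`, and this common value is
strictly positive. -/
theorem stmt12 (a b : ℝ) (ha : 0 < a) (hb : 0 < b) :
    2 * a * (∫ g, sech (a * g + b) ^ 2 * Real.tanh (a * g + b) ∂stdGaussian)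
        = -∫ g, g * sech (a * g + b) ^ 2 ∂stdGaussian ∧
    0 < 2 * a * (∫ g, sech (a * g + b) ^ 2 * Real.tanh (a * g + b) ∂stdGaussian) := by
  rw [integral_stdGaussian (fun g => sech (a*g+b)^2 * Real.tanh (a*g+b)),
    integral_stdGaussian (fun g => g * sech (a*g+b)^2)]
  constructor
  · exact ibp a b ha
  · exact mul_pos (by linarith) (pos_part a b ha hb)
end
end
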